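/- The set of almost quantum distributions is closed under coarse-graining of outcomes: if P is almost quantum with outcomes in {0,...,d−1} and one party k merges two distinct outcomes a ≠ a' of some input x_k into a single outcome, the resulting distribution is almost quantum. -/

import Mathlib

/-- Ordered product of operators applied to a vector. -/
def seqApply {H : Type*} [AddCommMonoid H] [Module ℂ H] {n : ℕ}
    (T : Fin n → (H →ₗ[ℂ] H)) (v : H) : H :=
  (List.ofFn T).foldr (fun f w => f w) v

/-- An almost quantum representation of an `n`-partite distribution `P`. -/
structure AQRep {n : ℕ} {A X : Type*} [Fintype A]
    (P : (Fin n → A) → (Fin n → X) → ℝ) where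
  H : Type
  [instN : NormedAddCommGroup H]
  [instI : InnerProductSpace ℂ H]
  φ : H
  E : Fin n → A → X → (H →ₗ[ℂ] H)
  norm_φ : ‖φ‖ = 1
  idem : ∀ k a x, E k a x ∘ₗ E k a x = E k a x
  selfAdj : ∀ k a x (v w : H), (inner ℂ ((E k a x) v) w : ℂ) = inner ℂ v ((E k a x) w)
  complete : ∀ k x, ∑ a, E k a x = (LinearMap.id : H →ₗ[ℂ] H)
  perm : ∀ (a : Fin n → A) (x : Fin n → X) (π : Equiv.Perm (Fin n)),
    seqApply (fun i => E (π i) (a (π i)) (x (π i))) φ = seqApply (fun i => E i (a i) (x i)) φ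
  prob : ∀ a x, (P a x : ℂ) = inner ℂ φ (seqApply (fun i => E i (a i) (x i)) φ)

/-- `P` is almost quantum iff it admits an almost quantum representation. -/
def IsAlmostQuantum {n : ℕ} {A X : Type*} [Fintype A]
    (P : (Fin n → A) → (Fin n → X) → ℝ) : Prop :=
  Nonempty (AQRep P)

lemma seqApply_succ {H : Type*} [AddCommMonoid H] [Module ℂ H] {n : ℕ}
    (T : Fin (n+1) → (H →ₗ[ℂ] H)) (v : H) :
    seqApply T v = T 0 (seqApply (fun i => T i.succ) v) := by
  simp [seqApply, List.ofFn_succ]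

lemma seqApply_zero_slot {H : Type*} [AddCommMonoid H] [Module ℂ H] :
    ∀ {n : ℕ} (T : Fin n → (H →ₗ[ℂ] H)) (j : Fin n), T j = 0 → ∀ v, seqApply T v = 0 := by
  intro n
  induction n with
  | zero => intro T j; exact j.elim0
  | succ m ih =>
    intro T j hj v
    rw [seqApply_succ]
    rcases Fin.eq_zero_or_eq_succ j with h | ⟨i, rfl⟩
    · subst h; rw [hj]; simp
    · rw [ih (fun i => T i.succ) i hj v]; simp

lemma seqApply_add_slot {H : Type*} [AddCommMonoid H] [Module ℂ H] :
    ∀ {n : ℕ} (T₁ T₂ T₃ : Fin n → (H →ₗ[ℂ] H)) (j : Fin n),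
      (∀ i, i ≠ j → T₁ i = T₃ i ∧ T₂ i = T₃ i) → T₃ j = T₁ j + T₂ j →
      ∀ v, seqApply T₃ v = seqApply T₁ v + seqApply T₂ v := by
  intro n
  induction n with
  | zero => intro _ _ _ j; exact j.elim0
  | succ m ih =>
    intro T₁ T₂ T₃ j hoff hj v
    rw [seqApply_succ, seqApply_succ, seqApply_succ]
    rcases Fin.eq_zero_or_eq_succ j with h | ⟨i, rfl⟩
    · subst h
      have h1 : (fun i : Fin m => T₁ i.succ) = fun i => T₃ i.succ :=
        funext fun i => (hoff i.succ (Fin.succ_ne_zero i)).1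
      have h2 : (fun i : Fin m => T₂ i.succ) = fun i => T₃ i.succ :=
        funext fun i => (hoff i.succ (Fin.succ_ne_zero i)).2
      rw [h1, h2, hj]; simp
    · have h0 : T₁ 0 = T₃ 0 ∧ T₂ 0 = T₃ 0 := hoff 0 (Fin.succ_ne_zero i).symm
      rw [ih (fun i' => T₁ i'.succ) (fun i' => T₂ i'.succ) (fun i' => T₃ i'.succ) i
          (fun i' hi' => hoff i'.succ (fun hc => hi' (Fin.succ_injective _ hc))) hj v]
      rw [h0.1, h0.2, map_add]

lemma ortho_of_complete {H A : Type*} [NormedAddCommGroup H] [InnerProductSpace ℂ H]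
    [Fintype A] [DecidableEq A] (E : A → (H →ₗ[ℂ] H))
    (idem : ∀ a, E a ∘ₗ E a = E a)
    (selfAdj : ∀ a (v w : H), (inner ℂ (E a v) w : ℂ) = inner ℂ v (E a w))
    (complete : ∑ a, E a = (LinearMap.id : H →ₗ[ℂ] H))
    {a b : A} (hab : a ≠ b) : E a ∘ₗ E b = 0 := by
  ext v
  set w := E b v with hw
  have hbw : E b w = w := by
    rw [hw]
    exact (LinearMap.ext_iff.mp (idem b) v).symm ▸ rfl
  have hwsum : w = ∑ c, E c w := by
    calc w = LinearMap.id (R := ℂ) w := rfl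
    _ = (∑ c, E c) w := by rw [complete]
    _ = ∑ c, E c w := by rw [LinearMap.sum_apply]
  have hsum : (inner ℂ w w : ℂ) = ∑ c, inner ℂ (E c w) (E c w) := by
    calc (inner ℂ w w : ℂ) = inner ℂ w (∑ c, E c w) := by rw [← hwsum]
    _ = ∑ c, (inner ℂ w (E c w) : ℂ) := inner_sum _ _ _
    _ = ∑ c, (inner ℂ (E c w) (E c w) : ℂ) := by
        refine Finset.sum_congr rfl fun c _ => ?_
        have h1 : E c (E c w) = E c w := LinearMap.ext_iff.mp (idem c) w
        calc (inner ℂ w (E c w) : ℂ) = inner ℂ w (E c (E c w)) := by rw [h1]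
        _ = inner ℂ (E c w) (E c w) := (selfAdj c w (E c w)).symm
  have hsum2 : (‖w‖^2 : ℝ) = ∑ c, ‖E c w‖^2 := by
    have h := hsum
    simp only [inner_self_eq_norm_sq_to_K] at h
    exact_mod_cast h
  have herase : ∑ c ∈ Finset.univ.erase b, ‖E c w‖^2 = 0 := by
    have h := Finset.add_sum_erase Finset.univ (fun c => ‖E c w‖^2) (Finset.mem_univ b)
    have hb : ‖E b w‖^2 = ‖w‖^2 := by rw [hbw]
    replace h : ‖E b w‖ ^ 2 + ∑ c ∈ Finset.univ.erase b, ‖E c w‖ ^ 2 = ∑ c, ‖E c w‖ ^ 2 := h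
    linarith [hsum2, h]
  have ha : ‖E a w‖^2 = 0 := by
    refine (Finset.sum_eq_zero_iff_of_nonneg fun i _ => sq_nonneg _).mp herase a ?_
    exact Finset.mem_erase.mpr ⟨hab, Finset.mem_univ a⟩
  have : E a w = 0 := by
    have := pow_eq_zero_iff (n := 2) (by norm_num) |>.mp ha
    simpa using this
  simpa [hw] using this


/-- the almost quantum set is closed under coarse-graining of outcomes.  If
party `k` merges the two distinct outcomes `a₀ ≠ a₁` of input `x₀` into the single
outcome `a₀` (so that the merged outcome collects both probabilities and `a₁` becomes
an outcome of probability zero for that input), the resulting distribution is almost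
quantum. -/
theorem almostQuantum_closed_coarseGraining
    {n : ℕ} {A X : Type*} [Fintype A] [DecidableEq A] [DecidableEq X]
    (P : (Fin n → A) → (Fin n → X) → ℝ)
    (hP : IsAlmostQuantum P)
    (k : Fin n) (x₀ : X) (a₀ a₁ : A) (hne : a₀ ≠ a₁) :
    IsAlmostQuantum (fun (a : Fin n → A) (x : Fin n → X) =>
      if x k = x₀ ∧ a k = a₀ then P a x + P (Function.update a k a₁) x
      else if x k = x₀ ∧ a k = a₁ then 0
      else P a x) := by
  classical
  obtain ⟨R⟩ := hP
  letI : NormedAddCommGroup R.H := R.instN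
  letI : InnerProductSpace ℂ R.H := R.instI
  -- orthogonality of projections with same input
  have hortho : ∀ (c c' : A), c ≠ c' → R.E k c x₀ ∘ₗ R.E k c' x₀ = 0 := fun c c' h =>
    ortho_of_complete (fun a => R.E k a x₀) (fun a => R.idem k a x₀)
      (fun a => R.selfAdj k a x₀) (R.complete k x₀) h
  -- the coarse-grained family of projections
  set F : Fin n → A → X → (R.H →ₗ[ℂ] R.H) := fun k' a x =>
    if k' = k ∧ x = x₀ then
      (if a = a₀ then R.E k a₀ x₀ + R.E k a₁ x₀ else if a = a₁ then 0 else R.E k' a x)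
    else R.E k' a x with hFdef
  have hF1 : ∀ k' a x, ¬(k' = k ∧ x = x₀) → F k' a x = R.E k' a x := by
    intro k' a x h; simp [hFdef, if_neg h]
  have hF2 : F k a₀ x₀ = R.E k a₀ x₀ + R.E k a₁ x₀ := by simp [hFdef]
  have hF3 : F k a₁ x₀ = 0 := by simp [hFdef, hne.symm]
  have hF4 : ∀ a, a ≠ a₀ → a ≠ a₁ → F k a x₀ = R.E k a x₀ := by
    intro a h0 h1; simp [hFdef, h0, h1]
  -- pointwise equality away from the special slot
  have hFslot : ∀ (a : Fin n → A) (x : Fin n → X) (i : Fin n), i ≠ k →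
      F i (a i) (x i) = R.E i (a i) (x i) := by
    intro a x i hi; exact hF1 i (a i) (x i) (fun h => hi h.1)
  -- key decomposition
  have key : ∀ (a : Fin n → A) (x : Fin n → X) (π : Equiv.Perm (Fin n)),
      seqApply (fun i => F (π i) (a (π i)) (x (π i))) R.φ =
        (if x k = x₀ ∧ a k = a₀ then
            seqApply (fun i => R.E (π i) (a (π i)) (x (π i))) R.φ
            + seqApply (fun i => R.E (π i) ((Function.update a k a₁) (π i)) (x (π i))) R.φ
         else if x k = x₀ ∧ a k = a₁ then 0
         else seqApply (fun i => R.E (π i) (a (π i)) (x (π i))) R.φ) := by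
    intro a x π
    have hπ : π (π.symm k) = k := π.apply_symm_apply k
    by_cases hx : x k = x₀
    · by_cases h0 : a k = a₀
      · rw [if_pos ⟨hx, h0⟩]
        refine seqApply_add_slot _ _ _ (π.symm k) ?_ ?_ R.φ
        · intro i hi
          have hik : π i ≠ k := fun hc => hi (by rw [← hc, Equiv.symm_apply_apply])
          constructor
          · rw [hFslot a x (π i) hik]
          · rw [Function.update_of_ne hik, hFslot a x (π i) hik]
        · rw [hπ, Function.update_self, hx, h0, hF2]
      · by_cases h1 : a k = a₁
        · rw [if_neg (fun h => h0 h.2), if_pos ⟨hx, h1⟩]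
          refine seqApply_zero_slot _ (π.symm k) ?_ R.φ
          rw [hπ, hx, h1]
          exact hF3
        · rw [if_neg (fun h => h0 h.2), if_neg (fun h => h1 h.2)]
          congr 1
          funext i
          by_cases hik : π i = k
          · rw [hik, hx]; exact hF4 (a k) (hik ▸ h0 ∘ (hik ▸ id)) (hik ▸ h1 ∘ (hik ▸ id))
          · exact hFslot a x (π i) hik
    · rw [if_neg (fun h => hx h.1), if_neg (fun h => hx h.1)]
      congr 1
      funext i
      by_cases hik : π i = k
      · exact hF1 (π i) (a (π i)) (x (π i)) (fun h => hx (by rw [← hik]; exact h.2))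
      · exact hFslot a x (π i) hik
  have keyone : ∀ (a : Fin n → A) (x : Fin n → X),
      seqApply (fun i => F i (a i) (x i)) R.φ =
        (if x k = x₀ ∧ a k = a₀ then
            seqApply (fun i => R.E i (a i) (x i)) R.φ
            + seqApply (fun i => R.E i ((Function.update a k a₁) i) (x i)) R.φ
         else if x k = x₀ ∧ a k = a₁ then 0
         else seqApply (fun i => R.E i (a i) (x i)) R.φ) := by
    intro a x
    exact key a x 1
  refine ⟨{ H := R.H, instN := R.instN, instI := R.instI, φ := R.φ, E := F,
            norm_φ := R.norm_φ, idem := ?_, selfAdj := ?_, complete := ?_,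
            perm := ?_, prob := ?_ }⟩
  · -- idem
    intro k' a x
    by_cases h : k' = k ∧ x = x₀
    · rw [h.1, h.2]
      by_cases h0 : a = a₀
      · rw [h0, hF2, LinearMap.add_comp, LinearMap.comp_add, LinearMap.comp_add,
          R.idem k a₀ x₀, hortho a₀ a₁ hne, hortho a₁ a₀ hne.symm, R.idem k a₁ x₀]
        simp
      · by_cases h1 : a = a₁
        · rw [h1, hF3]; simp
        · rw [hF4 a h0 h1]; exact R.idem k a x₀
    · rw [hF1 k' a x h]; exact R.idem k' a x
  · -- selfAdj
    intro k' a x v w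
    by_cases h : k' = k ∧ x = x₀
    · rw [h.1, h.2]
      by_cases h0 : a = a₀
      · rw [h0, hF2]
        simp only [LinearMap.add_apply, inner_add_left, inner_add_right]
        rw [R.selfAdj k a₀ x₀, R.selfAdj k a₁ x₀]
      · by_cases h1 : a = a₁
        · rw [h1, hF3]; simp
        · rw [hF4 a h0 h1]; exact R.selfAdj k a x₀ v w
    · rw [hF1 k' a x h]; exact R.selfAdj k' a x v w
  · -- complete
    intro k' x
    by_cases h : k' = k ∧ x = x₀
    · rw [h.1, h.2]
      have hterm : ∀ a, F k a x₀ = R.E k a x₀ + (if a = a₀ then R.E k a₁ x₀ else 0)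
          - (if a = a₁ then R.E k a₁ x₀ else 0) := by
        intro a
        by_cases h0 : a = a₀
        · subst h0; rw [hF2, if_pos rfl, if_neg hne]; abel
        · by_cases h1 : a = a₁
          · subst h1; rw [hF3, if_neg h0, if_pos rfl]; abel
          · rw [hF4 a h0 h1, if_neg h0, if_neg h1]; abel
      rw [Finset.sum_congr rfl (fun a _ => hterm a)]
      rw [Finset.sum_sub_distrib, Finset.sum_add_distrib]
      simp only [Finset.sum_ite_eq', Finset.mem_univ, if_true]
      rw [R.complete k x₀]; abel
    · have : ∀ a, F k' a x = R.E k' a x := fun a => hF1 k' a x h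
      rw [Finset.sum_congr rfl (fun a _ => this a)]
      exact R.complete k' x
  · -- perm
    intro a x π
    rw [key a x π, keyone a x]
    split_ifs with h h'
    · rw [R.perm a x π, R.perm (Function.update a k a₁) x π]
    · rfl
    · exact R.perm a x π
  · -- prob
    intro a x
    rw [keyone a x]
    split_ifs with h h'
    · push_cast
      rw [inner_add_right, ← R.prob a x, ← R.prob (Function.update a k a₁) x]
    · simp
    · exact R.prob a x
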